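/- Let q ≥ 2, n > 2q + 4, 1 ≤ ℓ ≤ q - 1, τ > 0, and let y_1,…,y_n ∈ ℝ^ℓ. Set w_{ij} = exp(-‖y_i - y_j‖²) (the y-Aware weighting) and, for nonzero z_1,…,z_n ∈ ℝ^q, let S_Z have entries s_{ij} = cos(z_i, z_j)/τ. If some embedding Z attains the entropic lower bound, L_W(S_Z) = H(W), then the labels lie on a hypersphere: there exist m ∈ ℝ^ℓ and ρ ≥ 0 with ‖y_i - m‖ = ρ for all i. -/

import Mathlib

open scoped BigOperators

/-- The weighted InfoNCE loss. -/
noncomputable def infoNCE {n : ℕ} (W S : Matrix (Fin n) (Fin n) ℝ) : ℝ :=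
  -(1 / (n : ℝ)) * ∑ i : Fin n, ∑ j ∈ Finset.univ.erase i,
    (W i j / ∑ k ∈ Finset.univ.erase i, W i k) *
      Real.log (Real.exp (S i j) / ∑ k ∈ Finset.univ.erase i, Real.exp (S i k))

/-- The entropic lower bound (with the convention `0 * log 0 = 0`,
which holds automatically since `Real.log 0 = 0`). -/
noncomputable def entropicBound {n : ℕ} (W : Matrix (Fin n) (Fin n) ℝ) : ℝ :=
  -(1 / (n : ℝ)) * ∑ i : Fin n, ∑ j ∈ Finset.univ.erase i,
    (W i j / ∑ k ∈ Finset.univ.erase i, W i k) *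
      Real.log (W i j / ∑ k ∈ Finset.univ.erase i, W i k)


/-- Cosine similarity of two vectors of `ℝ^q`. -/
noncomputable def cosSim {q : ℕ} (u v : EuclideanSpace ℝ (Fin q)) : ℝ :=
  (inner ℝ u v : ℝ) / (‖u‖ * ‖v‖)

/-- Latent similarity matrix `s_{ij} = cos(z_i, z_j)/τ`. -/
noncomputable def SCos {n q : ℕ} (τ : ℝ) (z : Fin n → EuclideanSpace ℝ (Fin q)) :
    Matrix (Fin n) (Fin n) ℝ :=
  Matrix.of fun i j => cosSim (z i) (z j) / τ

/-- y-Aware weights `w_{ij} = exp(-‖y_i - y_j‖²)`. -/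
noncomputable def Wlabel {n l : ℕ} (y : Fin n → EuclideanSpace ℝ (Fin l)) :
    Matrix (Fin n) (Fin n) ℝ :=
  Matrix.of fun i j => Real.exp (-‖y i - y j‖ ^ 2)

open RealInnerProductSpace

lemma term_nonneg {p q : ℝ} (hp : 0 < p) (hq : 0 < q) :
    0 ≤ q - p - p * (Real.log q - Real.log p) := by
  have h := Real.log_le_sub_one_of_pos (x := q / p) (div_pos hq hp)
  rw [Real.log_div hq.ne' hp.ne'] at h
  have := mul_le_mul_of_nonneg_left h hp.le
  have hqp : p * (q / p - 1) = q - p := by field_simp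
  nlinarith

lemma term_eq_zero {p q : ℝ} (hp : 0 < p) (hq : 0 < q)
    (h0 : q - p - p * (Real.log q - Real.log p) = 0) : p = q := by
  by_contra hne
  have hne1 : q / p ≠ 1 := by
    intro h1
    exact hne (by field_simp at h1; linarith)
  have h := Real.log_lt_sub_one_of_pos (div_pos hq hp) hne1
  rw [Real.log_div hq.ne' hp.ne'] at h
  have := mul_lt_mul_of_pos_left h hp
  have hqp : p * (q / p - 1) = q - p := by field_simp
  nlinarith

lemma row_expand {n l q : ℕ} (u : Fin n → EuclideanSpace ℝ (Fin q))
    (y : Fin n → EuclideanSpace ℝ (Fin l)) (a t b : ℝ)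
    (hG : ∀ i j, ⟪u i, u j⟫ = a - t * ‖y i - y j‖ ^ 2 + (if i = j then b else 0))
    (v : Fin n → ℝ) (i : Fin n) :
    ⟪u i, ∑ j, v j • u j⟫ =
      a * (∑ j, v j)
        - t * (‖y i‖ ^ 2 * (∑ j, v j) + (∑ j, v j * ‖y j‖ ^ 2)
            - 2 * ⟪y i, ∑ j, v j • y j⟫) + b * v i := by
  have h2 : ⟪y i, ∑ j, v j • y j⟫ = ∑ j, v j * ⟪y i, y j⟫ := by
    rw [inner_sum]
    exact Finset.sum_congr rfl fun j _ => real_inner_smul_right _ _ _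
  rw [h2]
  simp only [inner_sum, real_inner_smul_right, hG]
  have expand : ∀ j : Fin n, v j * (a - t * ‖y i - y j‖ ^ 2 + (if i = j then b else 0))
      = (a * v j - t * (‖y i‖ ^ 2 * v j + v j * ‖y j‖ ^ 2 - 2 * (v j * ⟪y i, y j⟫)))
        + (if i = j then b * v j else 0) := by
    intro j
    rw [@norm_sub_sq_real]
    split_ifs <;> ring
  rw [Finset.sum_congr rfl fun j _ => expand j]
  simp only [Finset.sum_add_distrib, Finset.sum_sub_distrib, Finset.sum_ite_eq,
    Finset.mem_univ, if_true, ← Finset.mul_sum]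


lemma quad_expand {n l q : ℕ} (u : Fin n → EuclideanSpace ℝ (Fin q))
    (y : Fin n → EuclideanSpace ℝ (Fin l)) (a t b : ℝ)
    (hG : ∀ i j, ⟪u i, u j⟫ = a - t * ‖y i - y j‖ ^ 2 + (if i = j then b else 0))
    (v : Fin n → ℝ) :
    ⟪∑ i, v i • u i, ∑ i, v i • u i⟫ =
      a * (∑ i, v i) ^ 2
        - t * (2 * (∑ i, v i) * (∑ i, v i * ‖y i‖ ^ 2) - 2 * ‖∑ i, v i • y i‖ ^ 2)
        + b * ∑ i, v i ^ 2 := by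
  have h3 : ∑ i, v i * ⟪y i, ∑ j, v j • y j⟫ = ‖∑ j, v j • y j‖ ^ 2 := by
    rw [← real_inner_self_eq_norm_sq, sum_inner]
    exact Finset.sum_congr rfl fun i _ => (real_inner_smul_left _ _ _).symm
  rw [sum_inner]
  simp only [real_inner_smul_left]
  rw [Finset.sum_congr rfl fun i _ => by rw [row_expand u y a t b hG v i]]
  have expand : ∀ i : Fin n, v i * (a * (∑ j, v j)
        - t * (‖y i‖ ^ 2 * (∑ j, v j) + (∑ j, v j * ‖y j‖ ^ 2)
            - 2 * ⟪y i, ∑ j, v j • y j⟫) + b * v i)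
      = (a * (∑ j, v j)) * v i
        - t * ((∑ j, v j) * (v i * ‖y i‖ ^ 2) + (∑ j, v j * ‖y j‖ ^ 2) * v i
            - 2 * (v i * ⟪y i, ∑ j, v j • y j⟫)) + b * v i ^ 2 := fun i => by ring
  rw [Finset.sum_congr rfl fun i _ => expand i]
  simp only [Finset.sum_add_distrib, Finset.sum_sub_distrib, ← Finset.mul_sum]
  rw [h3]
  ring
/-- Gibbs' inequality equality case over the "erase i" index sets. -/
lemma gibbs_equality {n : ℕ} (P Q : Fin n → Fin n → ℝ)
    (hP : ∀ i : Fin n, ∀ j ∈ Finset.univ.erase i, 0 < P i j)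
    (hQ : ∀ i : Fin n, ∀ j ∈ Finset.univ.erase i, 0 < Q i j)
    (hPsum : ∀ i : Fin n, ∑ j ∈ Finset.univ.erase i, P i j = 1)
    (hQsum : ∀ i : Fin n, ∑ j ∈ Finset.univ.erase i, Q i j = 1)
    (hAB : ∑ i : Fin n, ∑ j ∈ Finset.univ.erase i, P i j * Real.log (Q i j)
        = ∑ i : Fin n, ∑ j ∈ Finset.univ.erase i, P i j * Real.log (P i j)) :
    ∀ i : Fin n, ∀ j ∈ Finset.univ.erase i, P i j = Q i j := by
  have hzero : ∑ i : Fin n, ∑ j ∈ Finset.univ.erase i,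
      (Q i j - P i j - P i j * (Real.log (Q i j) - Real.log (P i j))) = 0 := by
    have e1 : ∀ i : Fin n, ∑ j ∈ Finset.univ.erase i,
        (Q i j - P i j - P i j * (Real.log (Q i j) - Real.log (P i j)))
        = (∑ j ∈ Finset.univ.erase i, P i j * Real.log (P i j))
          - (∑ j ∈ Finset.univ.erase i, P i j * Real.log (Q i j)) := by
      intro i
      have : ∀ j ∈ Finset.univ.erase i,
          Q i j - P i j - P i j * (Real.log (Q i j) - Real.log (P i j))
          = Q i j - P i j - (P i j * Real.log (Q i j) - P i j * Real.log (P i j)) :=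
        fun j _ => by ring
      rw [Finset.sum_congr rfl this]
      simp only [Finset.sum_sub_distrib, hPsum i, hQsum i]
      ring
    rw [Finset.sum_congr rfl fun i _ => e1 i, Finset.sum_sub_distrib, hAB, sub_self]
  have hnn : ∀ i : Fin n, ∀ j ∈ Finset.univ.erase i,
      0 ≤ Q i j - P i j - P i j * (Real.log (Q i j) - Real.log (P i j)) :=
    fun i j hj => term_nonneg (hP i j hj) (hQ i j hj)
  have houter := (Finset.sum_eq_zero_iff_of_nonneg
    (fun i _ => Finset.sum_nonneg (hnn i))).mp hzero
  intro i j hj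
  have hinner := (Finset.sum_eq_zero_iff_of_nonneg (hnn i)).mp
    (houter i (Finset.mem_univ i)) j hj
  exact term_eq_zero (hP i j hj) (hQ i j hj) hinner

noncomputable def uMap {n q : ℕ} (u : Fin n → EuclideanSpace ℝ (Fin q)) :
    EuclideanSpace ℝ (Fin n) →ₗ[ℝ] EuclideanSpace ℝ (Fin q) where
  toFun v := ∑ i, v i • u i
  map_add' v w := by
    simp only [PiLp.add_apply, add_smul, Finset.sum_add_distrib]
  map_smul' c v := by
    simp only [PiLp.smul_apply, smul_eq_mul, RingHom.id_apply, Finset.smul_sum, smul_smul]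

noncomputable def phiMap {n l : ℕ} (y : Fin n → EuclideanSpace ℝ (Fin l)) :
    EuclideanSpace ℝ (Fin n) →ₗ[ℝ] (EuclideanSpace ℝ (Fin l)) × ℝ × ℝ where
  toFun v := (∑ i, v i • y i, ∑ i, v i, ∑ i, v i * ‖y i‖ ^ 2)
  map_add' v w := by
    simp only [PiLp.add_apply, add_smul, add_mul, Finset.sum_add_distrib, Prod.mk_add_mk]
  map_smul' c v := by
    simp only [PiLp.smul_apply, smul_eq_mul, RingHom.id_apply, Prod.smul_mk,
      Finset.smul_sum, smul_smul, smul_eq_mul, mul_assoc, Finset.mul_sum]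

noncomputable def tMap {n l : ℕ} (y : Fin n → EuclideanSpace ℝ (Fin l)) :
    (EuclideanSpace ℝ (Fin l)) × ℝ →ₗ[ℝ] EuclideanSpace ℝ (Fin n) where
  toFun p := WithLp.toLp 2 (fun i => p.2 + ⟪y i, p.1⟫)
  map_add' p r := by
    ext i
    simp only [Prod.fst_add, Prod.snd_add, inner_add_right, PiLp.add_apply, PiLp.toLp_apply]
    ring
  map_smul' c p := by
    ext i
    simp only [Prod.smul_fst, Prod.smul_snd, inner_smul_right, PiLp.smul_apply, PiLp.toLp_apply,
      smul_eq_mul, RingHom.id_apply]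
    ring


lemma euclid_inner {n : ℕ} (x w : EuclideanSpace ℝ (Fin n)) :
    ⟪x, w⟫ = ∑ i, x i * w i := by
  simp [PiLp.inner_apply, RCLike.inner_apply]
  exact Finset.sum_congr rfl fun _ _ => mul_comm _ _

lemma sphere_eq {n l : ℕ} (y : Fin n → EuclideanSpace ℝ (Fin l))
    (hF : ∀ v : EuclideanSpace ℝ (Fin n),
      (∑ i, v i) = 0 → (∑ i, v i • y i) = 0 → (∑ i, v i * ‖y i‖ ^ 2) = 0) :
    ∃ (m : EuclideanSpace ℝ (Fin l)) (α : ℝ), ∀ i, ‖y i‖ ^ 2 = α + ⟪y i, m⟫ := by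
  set K : Submodule ℝ (EuclideanSpace ℝ (Fin n)) := LinearMap.range (tMap y) with hK
  set d : EuclideanSpace ℝ (Fin n) := WithLp.toLp 2 (fun i => ‖y i‖ ^ 2) with hd
  set v : EuclideanSpace ℝ (Fin n) := d - (K.orthogonalProjectionOnto d : EuclideanSpace ℝ (Fin n)) with hv
  have hvK : v ∈ Kᗮ := K.sub_starProjection_mem_orthogonal d
  have horth : ∀ p : (EuclideanSpace ℝ (Fin l)) × ℝ, ⟪tMap y p, v⟫ = 0 := by
    intro p
    exact (Submodule.mem_orthogonal K v).mp hvK _ ⟨p, rfl⟩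
  have hT : ∀ (p : (EuclideanSpace ℝ (Fin l)) × ℝ) i, tMap y p i = p.2 + ⟪y i, p.1⟫ :=
    fun _ _ => rfl
  -- sum v = 0
  have hv1 : (∑ i, v i) = 0 := by
    have := horth (0, 1)
    rw [euclid_inner] at this
    simpa [hT] using this
  -- sum v i • y i = 0
  have hv2 : (∑ i, v i • y i) = 0 := by
    have key : ∀ m : EuclideanSpace ℝ (Fin l), ⟪∑ i, v i • y i, m⟫ = 0 := by
      intro m
      have := horth (m, 0)
      rw [euclid_inner] at this
      simp only [hT, inner_zero_right, zero_add] at this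
      rw [sum_inner]
      simp only [real_inner_smul_left]
      calc ∑ i, v i * ⟪y i, m⟫ = ∑ i, ⟪y i, m⟫ * v i := by
            exact Finset.sum_congr rfl fun i _ => mul_comm _ _
        _ = 0 := this
    exact inner_self_eq_zero.mp (key _)
  have hv3 := hF v hv1 hv2
  have hdv : ⟪d, v⟫ = 0 := by
    rw [euclid_inner]
    calc ∑ i, d i * v i = ∑ i, v i * ‖y i‖ ^ 2 := by
          exact Finset.sum_congr rfl fun i _ => mul_comm _ _
      _ = 0 := hv3
  have hPv : ⟪(K.orthogonalProjectionOnto d : EuclideanSpace ℝ (Fin n)), v⟫ = 0 :=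
    (Submodule.mem_orthogonal K v).mp hvK _ (K.orthogonalProjectionOnto d).2
  have hv0 : v = 0 := by
    have h : ⟪v, v⟫ = 0 := by
      nth_rewrite 1 [hv]
      rw [inner_sub_left, hdv, hPv, sub_zero]
    exact inner_self_eq_zero.mp h
  have hdK : d ∈ K := by
    have heq : d = (K.orthogonalProjectionOnto d : EuclideanSpace ℝ (Fin n)) :=
      sub_eq_zero.mp (hv.symm.trans hv0)
    rw [heq]; exact (K.orthogonalProjectionOnto d).2
  obtain ⟨p, hp⟩ := hdK
  refine ⟨p.1, p.2, fun i => ?_⟩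
  have : d i = ‖y i‖ ^ 2 := rfl
  rw [← this, ← hp, hT]

/-- y-Aware: if some nonzero embedding attains the entropic lower
bound of the y-Aware loss, then the labels lie on a hypersphere. -/
theorem statement7 {n q l : ℕ} (hq : 2 ≤ q) (hn : 2 * q + 4 < n)
    (hl : 1 ≤ l) (hlq : l ≤ q - 1) (τ : ℝ) (hτ : 0 < τ)
    (y : Fin n → EuclideanSpace ℝ (Fin l))
    (z : Fin n → EuclideanSpace ℝ (Fin q)) (hz : ∀ i, z i ≠ 0)
    (hopt : infoNCE (Wlabel y) (SCos τ z) = entropicBound (Wlabel y)) :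
    ∃ (m : EuclideanSpace ℝ (Fin l)) (ρ : ℝ), 0 ≤ ρ ∧ ∀ i : Fin n, ‖y i - m‖ = ρ := by
  classical
  have hn0 : 0 < n := by omega
  have i0 : Fin n := ⟨0, hn0⟩
  haveI : Nontrivial (Fin n) := ⟨⟨⟨0, hn0⟩, ⟨1, by omega⟩, by simp [Fin.ext_iff]⟩⟩
  have hne : ∀ i : Fin n, (Finset.univ.erase i).Nonempty := by
    intro i
    obtain ⟨j, hj⟩ := exists_ne i
    exact ⟨j, Finset.mem_erase.mpr ⟨hj, Finset.mem_univ _⟩⟩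
  have hWpos : ∀ i j : Fin n, 0 < Wlabel y i j := fun i j => Real.exp_pos _
  have hWsumpos : ∀ i, 0 < ∑ k ∈ Finset.univ.erase i, Wlabel y i k :=
    fun i => Finset.sum_pos (fun j _ => hWpos i j) (hne i)
  have hEsumpos : ∀ i, 0 < ∑ k ∈ Finset.univ.erase i, Real.exp (SCos τ z i k) :=
    fun i => Finset.sum_pos (fun j _ => Real.exp_pos _) (hne i)
  -- Step 1: Gibbs equality
  have hAB : ∑ i : Fin n, ∑ j ∈ Finset.univ.erase i,
        (Wlabel y i j / ∑ k ∈ Finset.univ.erase i, Wlabel y i k) *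
          Real.log (Real.exp (SCos τ z i j) / ∑ k ∈ Finset.univ.erase i, Real.exp (SCos τ z i k))
      = ∑ i : Fin n, ∑ j ∈ Finset.univ.erase i,
        (Wlabel y i j / ∑ k ∈ Finset.univ.erase i, Wlabel y i k) *
          Real.log (Wlabel y i j / ∑ k ∈ Finset.univ.erase i, Wlabel y i k) := by
    simp only [infoNCE, entropicBound] at hopt
    refine mul_left_cancel₀ ?_ hopt
    have : ((n : ℝ))⁻¹ ≠ 0 := inv_ne_zero (Nat.cast_ne_zero.mpr hn0.ne')
    simpa using this
  have hPQ := gibbs_equality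
    (fun i j => Wlabel y i j / ∑ k ∈ Finset.univ.erase i, Wlabel y i k)
    (fun i j => Real.exp (SCos τ z i j) / ∑ k ∈ Finset.univ.erase i, Real.exp (SCos τ z i k))
    (fun i j _ => div_pos (hWpos i j) (hWsumpos i))
    (fun i j _ => div_pos (Real.exp_pos _) (hEsumpos i))
    (fun i => by rw [← Finset.sum_div]; exact div_self (hWsumpos i).ne')
    (fun i => by rw [← Finset.sum_div]; exact div_self (hEsumpos i).ne')
    hAB
  -- Step 2: S i j = -‖y i - y j‖² + c i
  have hSlog : ∀ i j : Fin n, j ≠ i →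
      SCos τ z i j = -‖y i - y j‖ ^ 2
        + (Real.log (∑ k ∈ Finset.univ.erase i, Real.exp (SCos τ z i k))
          - Real.log (∑ k ∈ Finset.univ.erase i, Wlabel y i k)) := by
    intro i j hj
    have h := hPQ i j (Finset.mem_erase.mpr ⟨hj, Finset.mem_univ _⟩)
    have hlog := congrArg Real.log h
    rw [Real.log_div (hWpos i j).ne' (hWsumpos i).ne',
      Real.log_div (Real.exp_pos _).ne' (hEsumpos i).ne', Real.log_exp] at hlog
    have hlogW : Real.log (Wlabel y i j) = -‖y i - y j‖ ^ 2 := Real.log_exp _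
    rw [hlogW] at hlog
    linarith
  -- c is constant
  set c : Fin n → ℝ := fun i =>
    Real.log (∑ k ∈ Finset.univ.erase i, Real.exp (SCos τ z i k))
      - Real.log (∑ k ∈ Finset.univ.erase i, Wlabel y i k) with hc
  have hSsym : ∀ i j : Fin n, SCos τ z i j = SCos τ z j i := by
    intro i j
    simp only [SCos, Matrix.of_apply, cosSim]
    rw [real_inner_comm, mul_comm]
  have hcij : ∀ i j : Fin n, i ≠ j → c i = c j := by
    intro i j hij
    have h1 := hSlog i j (Ne.symm hij)
    have h2 := hSlog j i hij
    rw [hSsym i j, h2, norm_sub_rev] at h1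
    simp only [hc]
    linarith
  have hcconst : ∀ i : Fin n, c i = c i0 := by
    intro i
    by_cases h : i = i0
    · rw [h]
    · exact hcij i i0 h
  set c0 : ℝ := c i0 with hc0
  -- Gram matrix identity
  set u : Fin n → EuclideanSpace ℝ (Fin q) := fun i => ‖z i‖⁻¹ • z i with hu
  have hznorm : ∀ i, ‖z i‖ ≠ 0 := fun i => norm_ne_zero_iff.mpr (hz i)
  have hGram : ∀ i j : Fin n, ⟪u i, u j⟫
      = τ * c0 - τ * ‖y i - y j‖ ^ 2 + (if i = j then 1 - τ * c0 else 0) := by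
    intro i j
    by_cases h : i = j
    · subst h
      rw [if_pos rfl]
      have : ⟪u i, u i⟫ = (1 : ℝ) := by
        rw [hu]
        rw [real_inner_smul_left, real_inner_smul_right, real_inner_self_eq_norm_sq]
        field_simp
        exact div_self (hznorm i)
      rw [this]
      simp
    · rw [if_neg h, add_zero]
      have h1 : ⟪u i, u j⟫ = cosSim (z i) (z j) := by
        rw [hu, cosSim]
        rw [real_inner_smul_left, real_inner_smul_right]
        field_simp
      have h2 : SCos τ z i j = -‖y i - y j‖ ^ 2 + c i :=
        hSlog i j (Ne.symm h)
      have h3 : cosSim (z i) (z j) = τ * SCos τ z i j := by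
        simp only [SCos, Matrix.of_apply]
        field_simp
      rw [h1, h3, h2, hcconst i]
      ring
  -- Step 3: τ * c0 = 1 by dimension counting
  have htc : τ * c0 = 1 := by
    by_contra hb
    have hbne : 1 - τ * c0 ≠ 0 := fun h => hb (by linarith)
    have hker : ∀ v, v ∈ LinearMap.ker (phiMap y) → uMap u v = 0 → v = 0 := by
      intro v hv h0
      rw [LinearMap.mem_ker] at hv
      have h1 : (∑ i, v i • y i) = 0 := congrArg Prod.fst hv
      have h2 : (∑ i, v i) = 0 := congrArg (fun p => p.2.1) hv
      have hquad := quad_expand u y (τ * c0) τ (1 - τ * c0) hGram v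
      have h0' : (∑ i, v i • u i) = 0 := h0
      rw [h0', h1, h2, inner_zero_left] at hquad
      simp only [norm_zero] at hquad
      have hsum : ∑ i, v i ^ 2 = 0 := by
        have : (1 - τ * c0) * ∑ i, v i ^ 2 = 0 := by linarith [hquad]
        exact (mul_eq_zero.mp this).resolve_left hbne
      have hvz : ∀ i, v i = 0 := by
        intro i
        have := (Finset.sum_eq_zero_iff_of_nonneg
          (fun i _ => sq_nonneg (v i))).mp hsum i (Finset.mem_univ i)
        exact pow_eq_zero_iff two_ne_zero |>.mp (by simpa using this)
      ext i
      exact hvz i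
    have hle : Module.finrank ℝ (LinearMap.ker (phiMap y)) ≤ q := by
      have h := LinearMap.finrank_le_finrank_of_injective
        (f := (uMap u).domRestrict (LinearMap.ker (phiMap y)))
        (by
          rw [← LinearMap.ker_eq_bot, LinearMap.ker_eq_bot']
          intro m hm
          exact Subtype.ext (hker m.1 m.2 hm))
      simpa [finrank_euclideanSpace_fin] using h
    have hge : n ≤ Module.finrank ℝ (LinearMap.ker (phiMap y)) + (l + 2) := by
      have h1 := LinearMap.finrank_range_add_finrank_ker (phiMap y)
      have h2 : Module.finrank ℝ (LinearMap.range (phiMap y)) ≤ l + 2 := by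
        have := Submodule.finrank_le (LinearMap.range (phiMap y))
        simpa [Module.finrank_prod, finrank_euclideanSpace_fin] using this
      have h3 : Module.finrank ℝ (EuclideanSpace ℝ (Fin n)) = n := finrank_euclideanSpace_fin
      omega
    omega
  -- Step 4: the orthogonality property of d
  have hF : ∀ v : EuclideanSpace ℝ (Fin n),
      (∑ i, v i) = 0 → (∑ i, v i • y i) = 0 → (∑ i, v i * ‖y i‖ ^ 2) = 0 := by
    intro v h1 h2
    have hquad := quad_expand u y (τ * c0) τ (1 - τ * c0) hGram v
    rw [h1, h2] at hquad
    have hquad0 : ⟪∑ i, v i • u i, ∑ i, v i • u i⟫ = 0 := by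
      rw [hquad, htc]
      simp
    have hU : (∑ i, v i • u i) = 0 := inner_self_eq_zero.mp hquad0
    have hrow := row_expand u y (τ * c0) τ (1 - τ * c0) hGram v i0
    rw [hU, h1, h2, htc] at hrow
    simp only [inner_zero_right, mul_zero, zero_mul, zero_add, zero_sub, sub_self,
      zero_mul, add_zero, sub_zero, mul_zero] at hrow
    have : τ * ∑ i, v i * ‖y i‖ ^ 2 = 0 := by linarith
    exact (mul_eq_zero.mp this).resolve_left hτ.ne'
  -- Step 5: conclude the sphere
  obtain ⟨m2, α, hsp⟩ := sphere_eq y hF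
  set m : EuclideanSpace ℝ (Fin l) := (2⁻¹ : ℝ) • m2 with hm
  have hsq : ∀ i, ‖y i - m‖ ^ 2 = α + ‖m‖ ^ 2 := by
    intro i
    rw [norm_sub_sq_real, hsp i, hm, real_inner_smul_right]
    ring
  refine ⟨m, ‖y i0 - m‖, norm_nonneg _, fun i => ?_⟩
  have h1 := hsq i
  have h2 := hsq i0
  nlinarith [norm_nonneg (y i - m), norm_nonneg (y i0 - m)]
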